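/- Define f(D) = λ_max[H (R_θ^{-1} + ∑_{e∈D} M_e)^{-1} H^T] on finite multisets D of E. Then f is ε-supermodular with ε(a,b) ≤ (b-a)·σ_max(H)^2·λ_max(R_θ)^2·ℓ_max: for all multisets A ⊆ B with |A| = a, |B| = b and all u ∈ E, f(A) - f(A∪{u}) ≥ f(B) - f(B∪{u}) - (b-a)·σ_max(H)^2·λ_max(R_θ)^2·ℓ_max. -/

import Mathlib

open Matrix

/-- Maximum eigenvalue of a real symmetric matrix (0 if not Hermitian). -/
noncomputable def lmax {n : ℕ} (A : Matrix (Fin n) (Fin n) ℝ) : ℝ :=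
  if h : A.IsHermitian then ⨆ i, h.eigenvalues i else 0

section Aux

variable {n : ℕ}

lemma psd_smul {A : Matrix (Fin n) (Fin n) ℝ} (hA : A.PosSemidef) {c : ℝ} (hc : 0 ≤ c) :
    (c • A).PosSemidef := by
  refine .of_dotProduct_mulVec_nonneg ?_ (fun x => ?_)
  · unfold Matrix.IsHermitian
    rw [conjTranspose_smul, hA.1]
    simp
  · rw [smul_mulVec, dotProduct_smul, smul_eq_mul]
    exact mul_nonneg hc (hA.dotProduct_mulVec_nonneg x)

lemma eig_le {A : Matrix (Fin n) (Fin n) ℝ} (hA : A.IsHermitian) {c : ℝ}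
    (h : (c • (1 : Matrix (Fin n) (Fin n) ℝ) - A).PosSemidef) (i : Fin n) :
    hA.eigenvalues i ≤ c := by
  have hv := h.dotProduct_mulVec_nonneg (hA.eigenvectorBasis i)
  have hnorm : dotProduct (star ⇑(hA.eigenvectorBasis i)) ⇑(hA.eigenvectorBasis i) = 1 := by
    have h1 : (inner ℝ (hA.eigenvectorBasis i) (hA.eigenvectorBasis i) : ℝ) =
        dotProduct (star ⇑(hA.eigenvectorBasis i)) ⇑(hA.eigenvectorBasis i) :=
      (EuclideanSpace.inner_eq_star_dotProduct _ _).trans (dotProduct_comm _ _)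
    rw [← h1, @inner_self_eq_norm_sq_to_K ℝ]
    simp [hA.eigenvectorBasis.orthonormal.1 i]
  have heig : hA.eigenvalues i =
      dotProduct (star ⇑(hA.eigenvectorBasis i)) (A *ᵥ ⇑(hA.eigenvectorBasis i)) := by
    have := hA.eigenvalues_eq i
    simpa using this
  rw [sub_mulVec, dotProduct_sub, smul_mulVec, one_mulVec, dotProduct_smul] at hv
  have hv2 : (0:ℝ) ≤ c • (1:ℝ) - hA.eigenvalues i := by
    rw [heig, ← hnorm]
    exact hv
  simp only [smul_eq_mul, mul_one] at hv2
  linarith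

lemma diag_congr_eq {A : Matrix (Fin n) (Fin n) ℝ} (hA : A.IsHermitian) :
    A = (hA.eigenvectorUnitary : Matrix (Fin n) (Fin n) ℝ) *
      diagonal hA.eigenvalues * star (hA.eigenvectorUnitary : Matrix (Fin n) (Fin n) ℝ) := by
  have := hA.spectral_theorem
  simpa using this

lemma smul_one_sub_psd {A : Matrix (Fin n) (Fin n) ℝ} (hA : A.IsHermitian) {c : ℝ}
    (h : ∀ i, hA.eigenvalues i ≤ c) :
    (c • (1 : Matrix (Fin n) (Fin n) ℝ) - A).PosSemidef := by
  set U : Matrix (Fin n) (Fin n) ℝ := (hA.eigenvectorUnitary : Matrix (Fin n) (Fin n) ℝ)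
    with hUdef
  have hU : U * star U = 1 := (Matrix.mem_unitaryGroup_iff).mp hA.eigenvectorUnitary.2
  have key : c • (1 : Matrix (Fin n) (Fin n) ℝ) - A
      = U * diagonal (fun i => c - hA.eigenvalues i) * star U := by
    conv_lhs => rw [diag_congr_eq hA]
    have h1 : c • (1 : Matrix (Fin n) (Fin n) ℝ) = U * diagonal (fun _ => c) * star U := by
      rw [← smul_one_eq_diagonal, mul_smul_comm, mul_one, smul_mul_assoc, hU]
    rw [h1, ← Matrix.sub_mul, ← Matrix.mul_sub, diagonal_sub]
  rw [key, star_eq_conjTranspose]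
  exact (PosSemidef.diagonal (fun i => sub_nonneg.2 (h i))).mul_mul_conjTranspose_same U

lemma sq_bound {X : Matrix (Fin n) (Fin n) ℝ} (hX : X.PosSemidef) {r : ℝ}
    (h : (r • (1 : Matrix (Fin n) (Fin n) ℝ) - X).PosSemidef) :
    ((r ^ 2) • (1 : Matrix (Fin n) (Fin n) ℝ) - X * X).PosSemidef := by
  have hA := hX.1
  set U : Matrix (Fin n) (Fin n) ℝ := (hA.eigenvectorUnitary : Matrix (Fin n) (Fin n) ℝ)
    with hUdef
  have hU : U * star U = 1 := (Matrix.mem_unitaryGroup_iff).mp hA.eigenvectorUnitary.2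
  have hU' : star U * U = 1 := (Matrix.mem_unitaryGroup_iff').mp hA.eigenvectorUnitary.2
  have hsq : X * X = U * diagonal (fun i => hA.eigenvalues i ^ 2) * star U := by
    conv_lhs => rw [diag_congr_eq hA]
    rw [← hUdef]
    have e1 : U * diagonal hA.eigenvalues * star U * (U * diagonal hA.eigenvalues * star U)
        = U * diagonal hA.eigenvalues *
          (star U * U * (diagonal hA.eigenvalues * star U)) := by
      simp only [Matrix.mul_assoc]
    rw [e1, hU', Matrix.one_mul, Matrix.mul_assoc U,
      ← Matrix.mul_assoc (diagonal hA.eigenvalues) (diagonal hA.eigenvalues),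
      diagonal_mul_diagonal, ← Matrix.mul_assoc]
    congr 2
    ext i
    ring_nf
  have key : (r ^ 2) • (1 : Matrix (Fin n) (Fin n) ℝ) - X * X
      = U * diagonal (fun i => r ^ 2 - hA.eigenvalues i ^ 2) * star U := by
    rw [hsq]
    have h1 : (r ^ 2) • (1 : Matrix (Fin n) (Fin n) ℝ)
        = U * diagonal (fun _ => r ^ 2) * star U := by
      rw [← smul_one_eq_diagonal, mul_smul_comm, mul_one, smul_mul_assoc, hU]
    rw [h1, ← Matrix.sub_mul, ← Matrix.mul_sub, diagonal_sub]
  rw [key, star_eq_conjTranspose]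
  refine (PosSemidef.diagonal ?_).mul_mul_conjTranspose_same U
  intro i
  simp only [Pi.zero_apply]
  have h0 : 0 ≤ hA.eigenvalues i := hX.eigenvalues_nonneg i
  have h1 : hA.eigenvalues i ≤ r := eig_le hA h i
  nlinarith

lemma lmax_eq {A : Matrix (Fin n) (Fin n) ℝ} (hA : A.IsHermitian) :
    lmax A = ⨆ i, hA.eigenvalues i := dif_pos hA

lemma le_lmax {A : Matrix (Fin n) (Fin n) ℝ} (hA : A.IsHermitian) (i : Fin n) :
    hA.eigenvalues i ≤ lmax A := by
  rw [lmax_eq hA]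
  exact le_ciSup (Set.Finite.bddAbove (Set.finite_range _)) i

lemma lmax_le_of_psd {A : Matrix (Fin n) (Fin n) ℝ} (hA : A.IsHermitian) {c : ℝ} (hc : 0 ≤ c)
    (h : (c • (1 : Matrix (Fin n) (Fin n) ℝ) - A).PosSemidef) : lmax A ≤ c := by
  rw [lmax_eq hA]
  rcases isEmpty_or_nonempty (Fin n) with he | hne
  · rw [Real.iSup_of_isEmpty]
    simpa using hc
  · exact ciSup_le (eig_le hA h)

lemma lmax_nonneg {A : Matrix (Fin n) (Fin n) ℝ} (hA : A.PosSemidef) : 0 ≤ lmax A := by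
  rcases isEmpty_or_nonempty (Fin n) with he | hne
  · rw [lmax_eq hA.1, Real.iSup_of_isEmpty]
  · exact le_trans (hA.eigenvalues_nonneg (Classical.arbitrary _))
      (le_lmax hA.1 (Classical.arbitrary _))

lemma lmax_psd_one_sub {A : Matrix (Fin n) (Fin n) ℝ} (hA : A.IsHermitian) :
    ((lmax A) • (1 : Matrix (Fin n) (Fin n) ℝ) - A).PosSemidef :=
  smul_one_sub_psd hA (le_lmax hA)

lemma inv_sub_inv_psd {A N : Matrix (Fin n) (Fin n) ℝ} (hA : A.PosDef) (hN : N.PosSemidef) :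
    (A⁻¹ - (A + N)⁻¹).PosSemidef ∧
    (A⁻¹ * N * A⁻¹ - (A⁻¹ - (A + N)⁻¹)).PosSemidef := by
  have hB : (A + N).PosDef := hA.add_posSemidef hN
  set B := A + N with hBdef
  have hdA : IsUnit A.det := hA.det_pos.ne'.isUnit
  have hdB : IsUnit B.det := hB.det_pos.ne'.isUnit
  have hA1 : A * A⁻¹ = 1 := Matrix.mul_nonsing_inv A hdA
  have hA2 : A⁻¹ * A = 1 := Matrix.nonsing_inv_mul A hdA
  have hB1 : B * B⁻¹ = 1 := Matrix.mul_nonsing_inv B hdB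
  have hB2 : B⁻¹ * B = 1 := Matrix.nonsing_inv_mul B hdB
  have hAiH : A⁻¹ᴴ = A⁻¹ := hA.inv.isHermitian
  have hBiH : B⁻¹ᴴ = B⁻¹ := hB.inv.isHermitian
  have hNe : N = B - A := by rw [hBdef]; abel
  have key : A⁻¹ - B⁻¹ = A⁻¹ * N * B⁻¹ := by
    rw [hNe, Matrix.mul_sub, Matrix.sub_mul, Matrix.mul_assoc A⁻¹ B B⁻¹, hB1,
      Matrix.mul_one, hA2, Matrix.one_mul]
  have key2 : A⁻¹ - B⁻¹ = B⁻¹ * N * A⁻¹ := by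
    rw [hNe, Matrix.mul_sub, Matrix.sub_mul, Matrix.mul_assoc B⁻¹ A A⁻¹, hA1,
      Matrix.mul_one, hB2, Matrix.one_mul]
  constructor
  · have id1 : A⁻¹ - B⁻¹ = B⁻¹ * N * B⁻¹ + B⁻¹ * N * (A⁻¹ * N * B⁻¹) := by
      calc A⁻¹ - B⁻¹ = B⁻¹ * N * A⁻¹ := key2
        _ = B⁻¹ * N * (B⁻¹ + (A⁻¹ - B⁻¹)) := by rw [show B⁻¹ + (A⁻¹ - B⁻¹) = A⁻¹ by abel]
        _ = B⁻¹ * N * B⁻¹ + B⁻¹ * N * (A⁻¹ - B⁻¹) := by rw [Matrix.mul_add]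
        _ = B⁻¹ * N * B⁻¹ + B⁻¹ * N * (A⁻¹ * N * B⁻¹) := by rw [← key]
    have p1 : (B⁻¹ * N * B⁻¹).PosSemidef := by
      have := hN.conjTranspose_mul_mul_same B⁻¹
      rwa [hBiH] at this
    have p2 : (B⁻¹ * N * (A⁻¹ * N * B⁻¹)).PosSemidef := by
      have := (hA.inv.posSemidef).conjTranspose_mul_mul_same (N * B⁻¹)
      have heq : (N * B⁻¹)ᴴ * A⁻¹ * (N * B⁻¹) = B⁻¹ * N * (A⁻¹ * N * B⁻¹) := by
        rw [conjTranspose_mul, hBiH, hN.1]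
        simp only [Matrix.mul_assoc]
      rwa [heq] at this
    rw [id1]
    exact p1.add p2
  · have id2 : A⁻¹ * N * A⁻¹ - (A⁻¹ - B⁻¹) = A⁻¹ * N * (B⁻¹ * N * A⁻¹) := by
      calc A⁻¹ * N * A⁻¹ - (A⁻¹ - B⁻¹)
          = A⁻¹ * N * A⁻¹ - A⁻¹ * N * B⁻¹ := by rw [key]
        _ = A⁻¹ * N * (A⁻¹ - B⁻¹) := by rw [Matrix.mul_sub]
        _ = A⁻¹ * N * (B⁻¹ * N * A⁻¹) := by rw [key2]
    have p3 : (A⁻¹ * N * (B⁻¹ * N * A⁻¹)).PosSemidef := by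
      have := (hB.inv.posSemidef).conjTranspose_mul_mul_same (N * A⁻¹)
      have heq : (N * A⁻¹)ᴴ * B⁻¹ * (N * A⁻¹) = A⁻¹ * N * (B⁻¹ * N * A⁻¹) := by
        rw [conjTranspose_mul, hAiH, hN.1]
        simp only [Matrix.mul_assoc]
      rwa [heq] at this
    rw [id2]
    exact p3

end Aux

/-- Theorem 4: the E-optimality objective is ε-supermodular with
`ε(a,b) ≤ (b-a) σ_max(H)² λ_max(R_θ)² ℓ_max`, where `σ_max(H)² = λ_max(HHᵀ)`
and `ℓ_max = max_{e∈E} λ_max(M_e)`. -/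
theorem E_optimality_epsilon_supermodular
    {E : Type*} [Fintype E] [Nonempty E] {p m : ℕ}
    (Rθ : Matrix (Fin p) (Fin p) ℝ) (hRθ : Rθ.PosDef)
    (M : E → Matrix (Fin p) (Fin p) ℝ) (hM : ∀ e, (M e).PosSemidef)
    (H : Matrix (Fin m) (Fin p) ℝ)
    (Y : Multiset E → Matrix (Fin p) (Fin p) ℝ)
    (hY : ∀ D : Multiset E, Y D = Rθ⁻¹ + (D.map M).sum)
    (f : Multiset E → ℝ)
    (hf : ∀ D : Multiset E, f D = lmax (H * (Y D)⁻¹ * Hᵀ)) :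
    ∀ (S T : Multiset E) (u : E), S ≤ T →
      f S - f (u ::ₘ S) ≥
        f T - f (u ::ₘ T) -
          ((Multiset.card T : ℝ) - (Multiset.card S : ℝ)) * lmax (H * Hᵀ) *
            (lmax Rθ) ^ 2 * ⨆ e : E, lmax (M e) := by
  intro S T u hST
  have hHt : Hᴴ = Hᵀ := conjTranspose_eq_transpose_of_trivial H
  set r : ℝ := lmax Rθ with hrdef
  set h2 : ℝ := lmax (H * Hᵀ) with h2def
  set ℓ : ℝ := ⨆ e : E, lmax (M e) with hℓdef
  have hHHt : (H * Hᵀ).PosSemidef := by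
    rw [← hHt]; exact posSemidef_self_mul_conjTranspose H
  have hh2 : 0 ≤ h2 := lmax_nonneg hHHt
  have hr0 : 0 ≤ r := lmax_nonneg hRθ.posSemidef
  have hl0 : ∀ e, 0 ≤ lmax (M e) := fun e => lmax_nonneg (hM e)
  have hle : ∀ e, lmax (M e) ≤ ℓ := fun e => by
    rw [hℓdef]
    exact le_ciSup (f := fun e => lmax (M e)) (Set.Finite.bddAbove (Set.finite_range _)) e
  have hℓ0 : 0 ≤ ℓ := le_trans (hl0 (Classical.arbitrary E)) (hle _)
  have hsum : ∀ D : Multiset E, ((D.map M).sum).PosSemidef := by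
    intro D
    induction D using Multiset.induction with
    | empty => simpa using (Matrix.PosSemidef.zero)
    | cons a s ih =>
      rw [Multiset.map_cons, Multiset.sum_cons]
      exact (hM a).add ih
  have hYpd : ∀ D, (Y D).PosDef := fun D => by
    rw [hY]; exact hRθ.inv.add_posSemidef (hsum D)
  have hYcons : ∀ (D : Multiset E) (v : E), Y (v ::ₘ D) = Y D + M v := by
    intro D v
    rw [hY, hY, Multiset.map_cons, Multiset.sum_cons]
    abel
  have hYinv_le : ∀ D, (r • (1 : Matrix (Fin p) (Fin p) ℝ) - (Y D)⁻¹).PosSemidef := by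
    intro D
    have h1 : (Rθ - (Y D)⁻¹).PosSemidef := by
      have := (inv_sub_inv_psd hRθ.inv (hsum D)).1
      rwa [Matrix.nonsing_inv_nonsing_inv Rθ hRθ.det_pos.ne'.isUnit, ← hY D] at this
    have h2' : (r • (1 : Matrix (Fin p) (Fin p) ℝ) - Rθ).PosSemidef :=
      lmax_psd_one_sub hRθ.isHermitian
    have h3 := h2'.add h1
    rwa [sub_add_sub_cancel] at h3
  -- the two key estimates for one step
  have step : ∀ (D : Multiset E),
      0 ≤ f D - f (u ::ₘ D) ∧ f D - f (u ::ₘ D) ≤ h2 * r ^ 2 * ℓ := by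
    intro D
    have hApd := hYpd D
    have hBpd := hYpd (u ::ₘ D)
    set A := Y D with hAdef
    set B := Y (u ::ₘ D) with hBdef2
    have hBeq : B = A + M u := hYcons D u
    obtain ⟨hΔpsd, hΔle⟩ :
        (A⁻¹ - B⁻¹).PosSemidef ∧ (A⁻¹ * (M u) * A⁻¹ - (A⁻¹ - B⁻¹)).PosSemidef := by
      rw [hBeq]; exact inv_sub_inv_psd hApd (hM u)
    have hPSD_A : (H * A⁻¹ * Hᵀ).PosSemidef := by
      rw [← hHt]; exact hApd.inv.posSemidef.mul_mul_conjTranspose_same H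
    have hPSD_B : (H * B⁻¹ * Hᵀ).PosSemidef := by
      rw [← hHt]; exact hBpd.inv.posSemidef.mul_mul_conjTranspose_same H
    have hHΔ : (H * A⁻¹ * Hᵀ - H * B⁻¹ * Hᵀ).PosSemidef := by
      have := hΔpsd.mul_mul_conjTranspose_same H
      rwa [hHt, Matrix.mul_sub, Matrix.sub_mul] at this
    have hmono : f (u ::ₘ D) ≤ f D := by
      rw [hf, hf, ← hAdef, ← hBdef2]
      refine lmax_le_of_psd hPSD_B.1 (lmax_nonneg hPSD_A) ?_
      have := (lmax_psd_one_sub hPSD_A.1).add hHΔ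
      rwa [sub_add_sub_cancel] at this
    refine ⟨by linarith, ?_⟩
    -- upper bound
    set c1 : ℝ := lmax (M u) with hc1def
    have P1 : (c1 • (A⁻¹ * A⁻¹) - A⁻¹ * (M u) * A⁻¹).PosSemidef := by
      have := (lmax_psd_one_sub (hM u).1).conjTranspose_mul_mul_same A⁻¹
      rw [hApd.inv.isHermitian] at this
      rwa [Matrix.mul_sub, Matrix.sub_mul, mul_smul_comm, mul_one, smul_mul_assoc]
        at this
    have P2 : ((c1 * r ^ 2) • (1 : Matrix (Fin p) (Fin p) ℝ)
        - c1 • (A⁻¹ * A⁻¹)).PosSemidef := by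
      have hsq := sq_bound hApd.inv.posSemidef (hYinv_le D)
      have := psd_smul hsq (hl0 u)
      rwa [smul_sub, smul_smul] at this
    have PΔ1 : ((c1 * r ^ 2) • (1 : Matrix (Fin p) (Fin p) ℝ)
        - (A⁻¹ - B⁻¹)).PosSemidef := by
      have t1 := P2.add P1
      rw [sub_add_sub_cancel] at t1
      have t2 := t1.add hΔle
      rwa [sub_add_sub_cancel] at t2
    have PH : ((c1 * r ^ 2) • (H * Hᵀ)
        - (H * A⁻¹ * Hᵀ - H * B⁻¹ * Hᵀ)).PosSemidef := by
      have := PΔ1.mul_mul_conjTranspose_same H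
      rw [hHt, Matrix.mul_sub, Matrix.sub_mul, Matrix.mul_smul, Matrix.smul_mul,
        Matrix.mul_one, Matrix.mul_sub, Matrix.sub_mul] at this
      exact this
    have PH2 : ((c1 * r ^ 2 * h2) • (1 : Matrix (Fin m) (Fin m) ℝ)
        - (c1 * r ^ 2) • (H * Hᵀ)).PosSemidef := by
      have := psd_smul (lmax_psd_one_sub hHHt.1)
        (mul_nonneg (hl0 u) (sq_nonneg r))
      rwa [smul_sub, smul_smul] at this
    have PH3 : ((h2 * r ^ 2 * ℓ) • (1 : Matrix (Fin m) (Fin m) ℝ)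
        - (c1 * r ^ 2 * h2) • (1 : Matrix (Fin m) (Fin m) ℝ)).PosSemidef := by
      rw [← sub_smul]
      refine psd_smul Matrix.PosSemidef.one ?_
      have key : 0 ≤ (ℓ - c1) * (r ^ 2 * h2) :=
        mul_nonneg (sub_nonneg.2 (hle u)) (mul_nonneg (sq_nonneg r) hh2)
      nlinarith [key]
    have Ptot : ((h2 * r ^ 2 * ℓ) • (1 : Matrix (Fin m) (Fin m) ℝ)
        - (H * A⁻¹ * Hᵀ - H * B⁻¹ * Hᵀ)).PosSemidef := by
      have t1 := PH3.add PH2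
      rw [sub_add_sub_cancel] at t1
      have t2 := t1.add PH
      rwa [sub_add_sub_cancel] at t2
    have hfinal : f D ≤ f (u ::ₘ D) + h2 * r ^ 2 * ℓ := by
      rw [hf, hf, ← hAdef, ← hBdef2]
      refine lmax_le_of_psd hPSD_A.1
        (add_nonneg (lmax_nonneg hPSD_B)
          (mul_nonneg (mul_nonneg hh2 (sq_nonneg r)) hℓ0)) ?_
      have := (lmax_psd_one_sub hPSD_B.1).add Ptot
      have heq : (lmax (H * B⁻¹ * Hᵀ) • (1 : Matrix (Fin m) (Fin m) ℝ) - H * B⁻¹ * Hᵀ)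
          + ((h2 * r ^ 2 * ℓ) • (1 : Matrix (Fin m) (Fin m) ℝ)
            - (H * A⁻¹ * Hᵀ - H * B⁻¹ * Hᵀ))
          = (lmax (H * B⁻¹ * Hᵀ) + h2 * r ^ 2 * ℓ) • (1 : Matrix (Fin m) (Fin m) ℝ)
            - H * A⁻¹ * Hᵀ := by
        rw [add_smul]
        abel
      rwa [heq] at this
    linarith
  -- conclude
  rcases eq_or_lt_of_le (Multiset.card_le_card hST) with hc | hc
  · have hSeqT : S = T := Multiset.eq_of_le_of_card_le hST (le_of_eq hc.symm)
    subst hSeqT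
    simp only [sub_self, zero_mul, sub_zero, ge_iff_le, le_refl]
  · have h1card : (1 : ℝ) ≤ (Multiset.card T : ℝ) - (Multiset.card S : ℝ) := by
      have : Multiset.card S + 1 ≤ Multiset.card T := hc
      have := (Nat.cast_le (α := ℝ)).2 this
      push_cast at this
      linarith
    obtain ⟨hS0, _⟩ := step S
    obtain ⟨_, hT1⟩ := step T
    have hCnn : 0 ≤ h2 * r ^ 2 * ℓ :=
      mul_nonneg (mul_nonneg hh2 (sq_nonneg r)) hℓ0
    have hd : h2 * r ^ 2 * ℓ ≤
        ((Multiset.card T : ℝ) - (Multiset.card S : ℝ)) * h2 * r ^ 2 * ℓ := by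
      have h := mul_le_mul_of_nonneg_right h1card hCnn
      calc h2 * r ^ 2 * ℓ = 1 * (h2 * r ^ 2 * ℓ) := by ring
        _ ≤ ((Multiset.card T : ℝ) - (Multiset.card S : ℝ)) * (h2 * r ^ 2 * ℓ) := h
        _ = ((Multiset.card T : ℝ) - (Multiset.card S : ℝ)) * h2 * r ^ 2 * ℓ := by ring
    linarith
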